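/- Let p₁, p₂, p₃, p₄ be pairwise distinct nonzero complex numbers and let z₀ be a complex number with z₀² = p₁p₂p₃p₄, z₀ ≠ p₁p₂ and z₀ ≠ p₃p₄. Let Λ : ℂ → ℂ be the function Λ(z) = cr(p₁ + z/p₁, p₂ + z/p₂, p₃ + z/p₃, p₄ + z/p₄). Then the derivative of Λ vanishes at z₀: Λ′(z₀) = 0. (Thus the two branch points of the scattering amplitude double cover, i.e. the two roots of f₂(λ) = 0, are the values Λ(±√(p₁p₂p₃p₄)).) -/

import Mathlib

/-- The cross-ratio `[q₁ : q₂ ; q₃ : q₄]` of an ordered quadruple of complex numbers. -/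
noncomputable def cr (q₁ q₂ q₃ q₄ : ℂ) : ℂ :=
  ((q₄ - q₁) * (q₂ - q₃)) / ((q₂ - q₁) * (q₄ - q₃))

theorem scattering_amplitude_nodal_genus_one_branch_points
    (p₁ p₂ p₃ p₄ z₀ : ℂ)
    (hp₁ : p₁ ≠ 0) (hp₂ : p₂ ≠ 0) (hp₃ : p₃ ≠ 0) (hp₄ : p₄ ≠ 0)
    (h12 : p₁ ≠ p₂) (h13 : p₁ ≠ p₃) (h14 : p₁ ≠ p₄)
    (h23 : p₂ ≠ p₃) (h24 : p₂ ≠ p₄) (h34 : p₃ ≠ p₄)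
    (hz : z₀ ^ 2 = p₁ * p₂ * p₃ * p₄)
    (hz12 : z₀ ≠ p₁ * p₂) (hz34 : z₀ ≠ p₃ * p₄) :
    deriv (fun z : ℂ =>
      cr (p₁ + z / p₁) (p₂ + z / p₂) (p₃ + z / p₃) (p₄ + z / p₄)) z₀ = 0 := by
  set c : ℂ := ((p₄ - p₁) * (p₂ - p₃)) / ((p₂ - p₁) * (p₄ - p₃)) with hc
  have hu : p₁ * p₂ - z₀ ≠ 0 := sub_ne_zero.mpr (Ne.symm hz12)
  have hv : p₃ * p₄ - z₀ ≠ 0 := sub_ne_zero.mpr (Ne.symm hz34)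
  have hfun : (fun z : ℂ =>
      cr (p₁ + z / p₁) (p₂ + z / p₂) (p₃ + z / p₃) (p₄ + z / p₄))
      = fun z : ℂ => c * (((p₁ * p₄ - z) * (p₂ * p₃ - z)) /
        ((p₁ * p₂ - z) * (p₃ * p₄ - z))) := by
    funext z
    unfold cr
    have e14 : (p₄ + z / p₄) - (p₁ + z / p₁)
        = ((p₄ - p₁) * (p₁ * p₄ - z)) / (p₁ * p₄) := by
      field_simp; ring
    have e23 : (p₂ + z / p₂) - (p₃ + z / p₃)
        = ((p₂ - p₃) * (p₂ * p₃ - z)) / (p₂ * p₃) := by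
      field_simp; ring
    have e21 : (p₂ + z / p₂) - (p₁ + z / p₁)
        = ((p₂ - p₁) * (p₁ * p₂ - z)) / (p₁ * p₂) := by
      field_simp; ring
    have e43 : (p₄ + z / p₄) - (p₃ + z / p₃)
        = ((p₄ - p₃) * (p₃ * p₄ - z)) / (p₃ * p₄) := by
      field_simp; ring
    rw [e14, e23, e21, e43]
    by_cases hDz : (p₁ * p₂ - z) * (p₃ * p₄ - z) = 0
    · rcases mul_eq_zero.mp hDz with h | h <;> rw [h] <;> simp
    · have huz : p₁ * p₂ - z ≠ 0 := fun h => hDz (by rw [h, zero_mul])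
      have hvz : p₃ * p₄ - z ≠ 0 := fun h => hDz (by rw [h, mul_zero])
      have h21 : p₂ - p₁ ≠ 0 := sub_ne_zero.mpr (Ne.symm h12)
      have h43 : p₄ - p₃ ≠ 0 := sub_ne_zero.mpr (Ne.symm h34)
      rw [hc]
      field_simp
  rw [hfun]
  -- derivative of the rational function
  have hN : HasDerivAt (fun z : ℂ => (p₁ * p₄ - z) * (p₂ * p₃ - z))
      ((-1) * (p₂ * p₃ - z₀) + (p₁ * p₄ - z₀) * (-1)) z₀ := by
    exact ((hasDerivAt_id z₀).const_sub (p₁ * p₄)).mul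
      ((hasDerivAt_id z₀).const_sub (p₂ * p₃))
  have hD : HasDerivAt (fun z : ℂ => (p₁ * p₂ - z) * (p₃ * p₄ - z))
      ((-1) * (p₃ * p₄ - z₀) + (p₁ * p₂ - z₀) * (-1)) z₀ := by
    exact ((hasDerivAt_id z₀).const_sub (p₁ * p₂)).mul
      ((hasDerivAt_id z₀).const_sub (p₃ * p₄))
  have hDne : (p₁ * p₂ - z₀) * (p₃ * p₄ - z₀) ≠ 0 := mul_ne_zero hu hv
  have hg := hN.div hD hDne
  have hval : (((-1) * (p₂ * p₃ - z₀) + (p₁ * p₄ - z₀) * (-1)) *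
        ((p₁ * p₂ - z₀) * (p₃ * p₄ - z₀)) -
      ((p₁ * p₄ - z₀) * (p₂ * p₃ - z₀)) *
        ((-1) * (p₃ * p₄ - z₀) + (p₁ * p₂ - z₀) * (-1))) /
      ((p₁ * p₂ - z₀) * (p₃ * p₄ - z₀)) ^ 2 = 0 := by
    rw [div_eq_zero_iff]
    left
    linear_combination (p₁ * p₄ + p₂ * p₃ - p₁ * p₂ - p₃ * p₄) * hz
  rw [hval] at hg
  have := (hg.const_mul c).deriv
  simpa using this
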